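/- arXiv:0905.2212 — 3 statements merged into one kernel-verified Lean document; each statement's English description precedes it below -/
import Mathlib

section
/- Let m ≥ 1 and let A be a symmetric m×m matrix over ℂ. Let p_A(Z) ∈ (ℂ[T])[Z] be the Mulmuley polynomial of A, and let s be the multiplicity of 0 as a root of p_A(Z), i.e., the largest integer s such that Z^s divides p_A(Z). Then the rank of A equals m − s. (This is Mulmuley's rank theorem as described and used in Section 2.7 of the paper; the symmetry hypothesis holds in all of the paper's applications, since the method is applied to the symmetrized block matrix.) -/
open Polynomial Matrix Module Submodule

/-- The Mulmuley polynomial of a square matrix `B` of size `N` over `ℂ`: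
the characteristic polynomial `det(Z·I − X·B)` of `X·B`, where
`X = diag(1, T, T², …, T^{N−1})` over the polynomial ring `ℂ[T]`.
It is an element of `(ℂ[T])[Z]`. -/
noncomputable def mulmuleyPoly {N : ℕ} (B : Matrix (Fin N) (Fin N) ℂ) :
    Polynomial (Polynomial ℂ) :=
  Matrix.charpoly
    ((Matrix.diagonal fun i : Fin N => (Polynomial.X : Polynomial ℂ) ^ (i : ℕ)) *
      B.map Polynomial.C)


lemma mul_coeff_prod {R : Type*} [CommRing R] {ι : Type*} (s : Finset ι) (f : ι → R[X])
    (d : ι → ℕ) (h : ∀ i, (X : R[X]) ^ (d i) ∣ f i) :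
    (∏ i ∈ s, f i).coeff (∑ i ∈ s, d i) = ∏ i ∈ s, (f i).coeff (d i) := by
  choose g hg using h
  have hf : ∏ i ∈ s, f i = X ^ (∑ i ∈ s, d i) * ∏ i ∈ s, g i := by
    rw [← Finset.prod_pow_eq_pow_sum, ← Finset.prod_mul_distrib]
    exact Finset.prod_congr rfl fun i _ => hg i
  have hcoe : ∀ i, (f i).coeff (d i) = (g i).coeff 0 := by
    intro i
    rw [hg i]
    simpa using coeff_X_pow_mul (g i) (d i) 0
  rw [hf]
  have := coeff_X_pow_mul (∏ i ∈ s, g i) (∑ i ∈ s, d i) 0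
  simp only [zero_add] at this
  rw [this]
  rw [coeff_zero_eq_eval_zero, eval_prod]
  exact Finset.prod_congr rfl fun i _ => by rw [hcoe i, coeff_zero_eq_eval_zero]

lemma mul_gram_det_ne_zero {m r : ℕ} (u : Fin r → Fin m → ℂ) (p : Fin r → Fin m)
    (hp : Function.Injective p) (hu1 : ∀ i, u i (p i) = 1)
    (hu0 : ∀ i (k : Fin m), (k : ℕ) < (p i : ℕ) → u i k = 0) :
    (Matrix.det (Matrix.of fun i j : Fin r =>
      ∑ k : Fin m, Polynomial.C (u i k * u j k) * (Polynomial.X : ℂ[X]) ^ (k : ℕ))) ≠ 0 := by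
  classical
  set G : Matrix (Fin r) (Fin r) ℂ[X] := Matrix.of fun i j : Fin r =>
      ∑ k : Fin m, Polynomial.C (u i k * u j k) * (Polynomial.X : ℂ[X]) ^ (k : ℕ) with hG
  set P : ℕ := ∑ i : Fin r, (p i : ℕ) with hP
  -- coefficient formula
  have hcoeff : ∀ i j (e : ℕ), (G i j).coeff e =
      if he : e < m then u i ⟨e, he⟩ * u j ⟨e, he⟩ else 0 := by
    intro i j e
    rw [hG]
    simp only [Matrix.of_apply, finset_sum_coeff, coeff_C_mul, coeff_X_pow]
    split
    · next he =>
      rw [Finset.sum_eq_single (⟨e, he⟩ : Fin m)]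
      · simp
      · intro k _ hk
        have : e ≠ (k : ℕ) := by
          intro h; apply hk; apply Fin.ext; simp [← h]
        simp [this]
      · simp
    · next he =>
      apply Finset.sum_eq_zero
      intro k _
      have : e ≠ (k : ℕ) := by
        intro h; exact he (h ▸ k.isLt)
      simp [this]
  have hdvd : ∀ i j, (X : ℂ[X]) ^ (max (p i : ℕ) (p j : ℕ)) ∣ G i j := by
    intro i j
    rw [X_pow_dvd_iff]
    intro e he
    rw [hcoeff]
    split
    · next hem =>
      rcases lt_max_iff.mp he with h1 | h1
      · rw [hu0 i ⟨e, hem⟩ h1, zero_mul]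
      · rw [hu0 j ⟨e, hem⟩ h1, mul_zero]
    · rfl
  have hdiag : ∀ i, (G i i).coeff (p i : ℕ) = 1 := by
    intro i
    rw [hcoeff]
    rw [dif_pos (p i).isLt]
    have : (⟨((p i : ℕ)), (p i).isLt⟩ : Fin m) = p i := by apply Fin.ext; rfl
    rw [this, hu1 i, one_mul]
  -- coefficient of det at P is 1
  have hdet : G.det.coeff P = 1 := by
    rw [Matrix.det_apply, finset_sum_coeff]
    rw [Finset.sum_eq_single (1 : Equiv.Perm (Fin r))]
    · simp only [Equiv.Perm.sign_one, one_smul, Equiv.Perm.one_apply]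
      rw [mul_coeff_prod Finset.univ (fun i => G i i) (fun i => (p i : ℕ))
        (fun i => by simpa using hdvd i i)]
      simp [hdiag]
    · intro σ _ hσ
      have hlt : P < ∑ i : Fin r, max ((p (σ i)) : ℕ) ((p i) : ℕ) := by
        rcases lt_or_eq_of_le (Finset.sum_le_sum
          (fun i _ => le_max_right ((p (σ i)) : ℕ) ((p i) : ℕ))) with h | h
        · exact h
        · exfalso
          have hmaxeq : ∀ i ∈ Finset.univ, max ((p (σ i)) : ℕ) ((p i) : ℕ) = ((p i) : ℕ) := by
            intro i _
            have := (Finset.sum_eq_sum_iff_of_le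
              (fun i (_ : i ∈ Finset.univ) =>
                le_max_right ((p (σ i)) : ℕ) ((p i) : ℕ))).mp h i (Finset.mem_univ i)
            exact this.symm
          have hle : ∀ i ∈ Finset.univ, ((p (σ i)) : ℕ) ≤ ((p i) : ℕ) := by
            intro i hi
            have := hmaxeq i hi
            exact le_of_max_le_left this.le
          have hsum : ∑ i : Fin r, ((p (σ i)) : ℕ) = ∑ i : Fin r, ((p i) : ℕ) :=
            Equiv.sum_comp σ (fun i => ((p i) : ℕ))
          have heq : ∀ i ∈ Finset.univ, ((p (σ i)) : ℕ) = ((p i) : ℕ) :=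
            (Finset.sum_eq_sum_iff_of_le hle).mp hsum
          apply hσ
          apply Equiv.ext
          intro i
          have : p (σ i) = p i := Fin.ext (heq i (Finset.mem_univ i))
          simpa using hp this
      have hzero : (∏ i : Fin r, G (σ i) i).coeff P = 0 := by
        have hd : (X : ℂ[X]) ^ (∑ i : Fin r, max ((p (σ i)) : ℕ) ((p i) : ℕ)) ∣
            ∏ i : Fin r, G (σ i) i := by
          rw [← Finset.prod_pow_eq_pow_sum]
          exact Finset.prod_dvd_prod_of_dvd _ _ (fun i _ => hdvd (σ i) i)
        exact (X_pow_dvd_iff.mp hd) P hlt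
      rw [Polynomial.coeff_smul, hzero, smul_zero]
    · simp
  intro h
  rw [h] at hdet
  simp at hdet


set_option synthInstance.maxHeartbeats 1000000 in
lemma mul_exists_echelon {m : ℕ} (r : ℕ) (V : Submodule ℂ (Fin m → ℂ))
    (hV : finrank ℂ V = r) :
    ∃ (u : Fin r → Fin m → ℂ) (p : Fin r → Fin m),
      Submodule.span ℂ (Set.range u) = V ∧ Function.Injective p ∧
      (∀ i, u i (p i) = 1) ∧ ∀ i (k : Fin m), (k : ℕ) < (p i : ℕ) → u i k = 0 := by
  classical
  induction r generalizing V with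
  | zero =>
    refine ⟨fun i => i.elim0, fun i => i.elim0, ?_, ?_, fun i => i.elim0, fun i => i.elim0⟩
    · rw [Set.range_eq_empty, Submodule.span_empty]
      exact (Submodule.finrank_eq_zero.mp hV).symm
    · intro i; exact i.elim0
  | succ r ih =>
    have hVne : V ≠ ⊥ := by
      intro h
      rw [h] at hV
      simp [finrank_bot] at hV
    obtain ⟨v₀, hv₀V, hv₀⟩ := Submodule.exists_mem_ne_zero_of_ne_bot hVne
    -- the set of coordinates where some element of V is nonzero
    set s : Finset (Fin m) := Finset.univ.filter (fun k => ∃ v ∈ V, v k ≠ 0) with hs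
    have hsne : s.Nonempty := by
      have : ∃ k, v₀ k ≠ 0 := by
        by_contra h
        push_neg at h
        exact hv₀ (funext h)
      obtain ⟨k, hk⟩ := this
      exact ⟨k, by simp [hs]; exact ⟨v₀, hv₀V, hk⟩⟩
    set p₀ : Fin m := s.min' hsne with hp₀
    obtain ⟨v, hvV, hvp₀⟩ : ∃ v ∈ V, v p₀ ≠ 0 := by
      have h := s.min'_mem hsne
      exact (Finset.mem_filter.mp h).2
    have hlow : ∀ w ∈ V, ∀ k : Fin m, (k : ℕ) < (p₀ : ℕ) → w k = 0 := by
      intro w hw k hk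
      by_contra hne
      have hks : k ∈ s := by simp [hs]; exact ⟨w, hw, hne⟩
      have := s.min'_le k hks
      omega
    set u₀ : Fin m → ℂ := (v p₀)⁻¹ • v with hu₀
    have hu₀V : u₀ ∈ V := Submodule.smul_mem V _ hvV
    have hu₀p₀ : u₀ p₀ = 1 := by
      simp [hu₀, inv_mul_cancel₀ hvp₀]
    -- the hyperplane
    set V' : Submodule ℂ (Fin m → ℂ) := V ⊓ LinearMap.ker (LinearMap.proj (R := ℂ) p₀) with hV'
    have hV'rank : finrank ℂ V' = r := by
      set φ : V →ₗ[ℂ] ℂ := (LinearMap.proj (R := ℂ) (φ := fun _ : Fin m => ℂ) p₀).comp V.subtype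
        with hφ
      have hker : Submodule.map V.subtype (LinearMap.ker φ) = V' := by
        rw [hφ, LinearMap.ker_comp, Submodule.map_comap_subtype]
      have hrange : LinearMap.range φ = ⊤ := by
        rw [eq_top_iff]
        intro c _
        exact ⟨c • ⟨u₀, hu₀V⟩, by simp [hφ, LinearMap.proj, hu₀p₀]⟩
      have h1 : finrank ℂ (LinearMap.range φ) + finrank ℂ (LinearMap.ker φ) = r + 1 := by
        rw [LinearMap.finrank_range_add_finrank_ker, hV]
      rw [hrange] at h1
      have h2 : finrank ℂ (⊤ : Submodule ℂ ℂ) = 1 := by simp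
      have h3 : finrank ℂ (LinearMap.ker φ) = r := by omega
      rw [← hker]
      rw [← h3]
      exact (LinearEquiv.finrank_eq
        (Submodule.equivMapOfInjective V.subtype V.injective_subtype (LinearMap.ker φ))).symm
    obtain ⟨u', p', hspan', hp', hu1', hu0'⟩ := ih V' hV'rank
    have hu'V' : ∀ i, u' i ∈ V' := by
      intro i
      rw [← hspan']
      exact Submodule.subset_span ⟨i, rfl⟩
    refine ⟨Fin.cons u₀ u', Fin.cons p₀ p', ?_, ?_, ?_, ?_⟩
    · rw [Fin.range_cons, Submodule.span_insert, hspan']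
      apply le_antisymm
      · apply sup_le
        · rw [Submodule.span_singleton_le_iff_mem]; exact hu₀V
        · exact inf_le_left
      · intro w hw
        rw [Submodule.mem_sup]
        refine ⟨(w p₀) • u₀, ?_, w - (w p₀) • u₀, ?_, by abel⟩
        · exact Submodule.mem_span_singleton.mpr ⟨w p₀, rfl⟩
        · constructor
          · exact Submodule.sub_mem V hw (Submodule.smul_mem V _ hu₀V)
          · simp [LinearMap.mem_ker, LinearMap.proj, hu₀p₀]
    · rw [Fin.cons_injective_iff]
      constructor
      · rintro ⟨i, hi⟩
        have h0 : u' i p₀ = 0 := (hu'V' i).2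
        have h1 := hu1' i
        rw [hi] at h1
        exact zero_ne_one (h0.symm.trans h1)
      · exact hp'
    · intro i
      refine Fin.cases ?_ ?_ i
      · simp [hu₀p₀]
      · intro j; simpa using hu1' j
    · intro i
      refine Fin.cases ?_ ?_ i
      · intro k hk; simpa using hlow u₀ hu₀V k hk
      · intro j k hk
        simp only [Fin.cons_succ] at hk ⊢
        exact hu0' j k hk


set_option maxHeartbeats 1000000 in
lemma mul_charpoly_comm {K : Type*} [Field K] {m r : ℕ} (U : Matrix (Fin m) (Fin r) K)
    (V : Matrix (Fin r) (Fin m) K) :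
    (U * V).charpoly * X ^ r = X ^ m * (V * U).charpoly := by
  classical
  set L := FractionRing (Polynomial K) with hL
  set ψ : K[X] →+* L := (algebraMap (K[X]) L : K[X] →+* L) with hψdef
  have hψ : Function.Injective ψ := IsFractionRing.injective _ _
  apply hψ
  set z : L := ψ X with hz0
  have hz : z ≠ 0 := fun h => Polynomial.X_ne_zero (hψ (h.trans (map_zero ψ).symm))
  set U' : Matrix (Fin m) (Fin r) L := U.map (⇑(ψ.comp C)) with hU'
  set V' : Matrix (Fin r) (Fin m) L := V.map (⇑(ψ.comp C)) with hV'
  have hmap : ∀ {n : ℕ} (M : Matrix (Fin n) (Fin n) K),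
      (charmatrix M).map ⇑ψ = z • (1 : Matrix (Fin n) (Fin n) L) - M.map (⇑(ψ.comp C)) := by
    intro n M
    ext i j
    by_cases h : i = j
    · subst h
      simp [Matrix.map_apply, Matrix.one_apply, hz0]
    · simp [Matrix.map_apply, Matrix.one_apply_ne h, charmatrix_apply_ne _ _ _ h, h]
  have hdet : ∀ {n : ℕ} (M : Matrix (Fin n) (Fin n) K),
      ψ M.charpoly = ((z • (1 : Matrix (Fin n) (Fin n) L) - M.map (⇑(ψ.comp C)))).det := by
    intro n M
    rw [Matrix.charpoly, RingHom.map_det, RingHom.mapMatrix_apply, hmap]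
  -- Schur complement computation
  haveI : Invertible (1 : Matrix (Fin r) (Fin r) L) := invertibleOne
  haveI hinv : Invertible (z • (1 : Matrix (Fin m) (Fin m) L)) :=
    ⟨z⁻¹ • (1 : Matrix (Fin m) (Fin m) L), by
      rw [Matrix.smul_mul, Matrix.mul_smul, Matrix.one_mul, smul_smul,
        inv_mul_cancel₀ hz, one_smul], by
      rw [Matrix.smul_mul, Matrix.mul_smul, Matrix.one_mul, smul_smul,
        mul_inv_cancel₀ hz, one_smul]⟩
  have h22 := Matrix.det_fromBlocks₂₂ (z • (1 : Matrix (Fin m) (Fin m) L)) U' V'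
    (1 : Matrix (Fin r) (Fin r) L)
  have h11 := Matrix.det_fromBlocks₁₁ (z • (1 : Matrix (Fin m) (Fin m) L)) U' V'
    (1 : Matrix (Fin r) (Fin r) L)
  rw [invOf_one, Matrix.mul_one, Matrix.det_one, one_mul] at h22
  have hinvof : ⅟ (z • (1 : Matrix (Fin m) (Fin m) L)) = z⁻¹ • (1 : Matrix (Fin m) (Fin m) L) :=
    invOf_eq_right_inv (by
      rw [Matrix.smul_mul, Matrix.mul_smul, Matrix.one_mul, smul_smul,
        mul_inv_cancel₀ hz, one_smul])
  rw [hinvof] at h11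
  have hVU : V' * (z⁻¹ • (1 : Matrix (Fin m) (Fin m) L)) * U' = z⁻¹ • (V' * U') := by
    rw [Matrix.mul_smul, Matrix.mul_one, Matrix.smul_mul]
  rw [hVU] at h11
  have hdetsm : (z • (1 : Matrix (Fin m) (Fin m) L)).det = z ^ m := by
    rw [Matrix.det_smul, Matrix.det_one, mul_one, Fintype.card_fin]
  rw [hdetsm] at h11
  have hkey : (z • 1 - U' * V').det * z ^ r = z ^ m * (z • 1 - V' * U').det := by
    have haux : (1 - z⁻¹ • (V' * U')).det * z ^ r = (z • (1 : Matrix (Fin r) (Fin r) L) - V' * U').det := by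
      rw [mul_comm]
      have hsm : z • ((1 : Matrix (Fin r) (Fin r) L) - z⁻¹ • (V' * U')) =
          z • (1 : Matrix (Fin r) (Fin r) L) - V' * U' := by
        rw [smul_sub, smul_smul, mul_inv_cancel₀ hz, one_smul]
      rw [← hsm, Matrix.det_smul, Fintype.card_fin]
    rw [← h22, h11, mul_assoc, haux]
  rw [_root_.map_mul, _root_.map_mul, map_pow, map_pow, hdet, hdet, ← hz0]
  have hUV' : (U * V).map (⇑(ψ.comp C)) = U' * V' := Matrix.map_mul
  have hVU' : (V * U).map (⇑(ψ.comp C)) = V' * U' := Matrix.map_mul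
  rw [hUV', hVU']
  exact hkey

set_option maxHeartbeats 1000000 in
/-- **Mulmuley's rank theorem** (symmetric case): for a symmetric `m × m`
matrix `A` over `ℂ` with `m ≥ 1`, if `s` is the multiplicity of `0` as a root
of the Mulmuley polynomial of `A` (i.e. the largest `s` with `Z^s ∣ p_A(Z)`),
then `rank A = m − s`. -/
theorem rank_eq_sub_rootMultiplicity_mulmuley {m : ℕ} (hm : 1 ≤ m)
    (A : Matrix (Fin m) (Fin m) ℂ) (hA : A.IsSymm) :
    A.rank = m - (mulmuleyPoly A).rootMultiplicity 0 := by
  classical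
  set r := A.rank with hr
  set V : Submodule ℂ (Fin m → ℂ) := LinearMap.range A.mulVecLin with hV
  have hVr : finrank ℂ V = r := rfl
  obtain ⟨u, p, hspan, hp, hu1, hu0⟩ := mul_exists_echelon r V hVr
  set B : Matrix (Fin m) (Fin r) ℂ := Matrix.of (fun k i => u i k) with hB
  have hmemV : ∀ i, u i ∈ V := fun i => hspan ▸ Submodule.subset_span ⟨i, rfl⟩
  set u' : Fin r → V := fun i => ⟨u i, hmemV i⟩ with hu'
  have htop : ⊤ ≤ Submodule.span ℂ (Set.range u') := by
    rintro ⟨x, hx⟩ -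
    have hx' : x ∈ Submodule.span ℂ (Set.range u) := hspan.symm ▸ hx
    rw [mem_span_range_iff_exists_fun] at hx'
    obtain ⟨c, hc⟩ := hx'
    rw [mem_span_range_iff_exists_fun]
    refine ⟨c, ?_⟩
    apply Subtype.ext
    show ((∑ i, c i • u' i : V) : Fin m → ℂ) = x
    rw [← hc, AddSubmonoidClass.coe_finset_sum]
    exact Finset.sum_congr rfl fun i _ => by simp [hu']
  set b : Basis (Fin r) ℂ V := basisOfTopLeSpanOfCardEqFinrank u' htop
    (by simp [hVr]) with hb
  have hbcoe : ∀ i, (b i : Fin m → ℂ) = u i := by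
    intro i; rw [hb, coe_basisOfTopLeSpanOfCardEqFinrank]
  have hcolA : ∀ j, Aᵀ j ∈ V := by
    intro j
    exact ⟨Pi.single j 1, by
      simp only [Matrix.mulVecLin_apply, Matrix.mulVec_single_one]; rfl⟩
  set Cc : Matrix (Fin r) (Fin m) ℂ := Matrix.of (fun i j => b.repr ⟨Aᵀ j, hcolA j⟩ i) with hCc
  have hrepr : ∀ (x : V) (k : Fin m), ∑ i, b.repr x i * u i k = (x : Fin m → ℂ) k := by
    intro x k
    calc ∑ i, b.repr x i * u i k = ((∑ i, b.repr x i • b i : V) : Fin m → ℂ) k := by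
          push_cast
          rw [Finset.sum_apply]
          exact Finset.sum_congr rfl fun i _ => by rw [hbcoe]; simp [Pi.smul_apply, smul_eq_mul]
      _ = (x : Fin m → ℂ) k := by rw [b.sum_repr x]
  have hBC : B * Cc = A := by
    ext k j
    rw [Matrix.mul_apply]
    have h1 := hrepr ⟨Aᵀ j, hcolA j⟩ k
    calc ∑ i, B k i * Cc i j = ∑ i, b.repr ⟨Aᵀ j, hcolA j⟩ i * u i k :=
          Finset.sum_congr rfl fun i _ => by rw [hB, hCc]; simp [mul_comm]
      _ = A k j := h1
  have hAT : Aᵀ = A := hA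
  have hVle : V ≤ LinearMap.range (Ccᵀ).mulVecLin := by
    have h1 : Aᵀ = Ccᵀ * Bᵀ := by rw [← hBC, Matrix.transpose_mul]
    have h2 : LinearMap.range Aᵀ.mulVecLin ≤ LinearMap.range (Ccᵀ).mulVecLin := by
      rw [h1, Matrix.mulVecLin_mul]
      exact LinearMap.range_comp_le_range _ _
    rw [hAT] at h2
    exact h2
  have hCrank : finrank ℂ (LinearMap.range (Ccᵀ).mulVecLin) ≤ r := by
    have h1 := Ccᵀ.rank_le_card_width
    simpa [Matrix.rank] using h1
  have hVC : LinearMap.range (Ccᵀ).mulVecLin = V :=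
    (Submodule.eq_of_le_of_finrank_le hVle (by rw [hVr]; exact hCrank)).symm
  have hrowC : ∀ i, Cc i ∈ V := by
    intro i
    rw [← hVC]
    exact ⟨Pi.single i 1, by
      simp only [Matrix.mulVecLin_apply, Matrix.mulVec_single_one, Matrix.transpose_transpose]; rfl⟩
  set R : Matrix (Fin r) (Fin r) ℂ := Matrix.of (fun k i => b.repr ⟨Cc i, hrowC i⟩ k) with hR
  have hBR : B * R = Ccᵀ := by
    ext k i
    rw [Matrix.mul_apply]
    have h1 := hrepr ⟨Cc i, hrowC i⟩ k
    calc ∑ j, B k j * R j i = ∑ j, b.repr ⟨Cc i, hrowC i⟩ j * u j k :=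
          Finset.sum_congr rfl fun j _ => by rw [hB, hR]; simp [mul_comm]
      _ = Ccᵀ k i := h1
  have hCRB : Cc = Rᵀ * Bᵀ := by
    have h1 := congrArg Matrix.transpose hBR
    rw [Matrix.transpose_mul] at h1
    rw [Matrix.transpose_transpose] at h1
    exact h1.symm
  have hrankR : r ≤ Rᵀ.rank := by
    calc r = A.rank := hr
      _ = (B * (Rᵀ * Bᵀ)).rank := by rw [← hCRB, hBC]
      _ ≤ (Rᵀ * Bᵀ).rank := Matrix.rank_mul_le_right _ _
      _ ≤ Rᵀ.rank := Matrix.rank_mul_le_left _ _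
  have hdetR : Rᵀ.det ≠ 0 := by
    have hrankR' : Rᵀ.rank = r := le_antisymm (by simpa using Rᵀ.rank_le_card_width) hrankR
    have htop' : LinearMap.range (Rᵀ).mulVecLin = ⊤ := by
      apply Submodule.eq_top_of_finrank_eq
      show finrank ℂ (LinearMap.range (Rᵀ).mulVecLin) = finrank ℂ (Fin r → ℂ)
      rw [Module.finrank_fintype_fun_eq_card, Fintype.card_fin]
      exact hrankR'
    have hsurj : Function.Surjective (Rᵀ).mulVecLin := by
      rw [← LinearMap.range_eq_top]
      exact htop'
    have hinj : Function.Injective (Rᵀ).mulVec := by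
      have := LinearMap.injective_iff_surjective.mpr hsurj
      intro x y hxy
      exact this (show (Rᵀ).mulVecLin x = (Rᵀ).mulVecLin y by
        simpa [Matrix.mulVecLin_apply, Matrix.mulVec_transpose] using hxy)
    have hu : IsUnit Rᵀ := Matrix.mulVec_injective_iff_isUnit.mp hinj
    have := (Matrix.isUnit_iff_isUnit_det Rᵀ).mp hu
    exact this.ne_zero
  -- Gram matrix over ℂ[X]
  set Xd : Matrix (Fin m) (Fin m) ℂ[X] :=
    Matrix.diagonal (fun k : Fin m => (X : ℂ[X]) ^ (k : ℕ)) with hXd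
  set G : Matrix (Fin r) (Fin r) ℂ[X] := (Bᵀ).map C * Xd * (B.map C) with hG
  have hGeq : G = Matrix.of fun i j : Fin r =>
      ∑ k : Fin m, Polynomial.C (u i k * u j k) * (X : ℂ[X]) ^ (k : ℕ) := by
    refine Matrix.ext fun i j => ?_
    rw [Matrix.of_apply, hG, Matrix.mul_apply]
    apply Finset.sum_congr rfl
    intro k _
    rw [hXd, Matrix.mul_diagonal]
    simp only [Matrix.map_apply, Matrix.transpose_apply, Matrix.of_apply, hB]
    rw [_root_.map_mul]
    ring
  have hGdet : G.det ≠ 0 := by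
    rw [hGeq]
    exact mul_gram_det_ne_zero u p hp hu1 hu0
  -- move to the fraction field
  set K' : Type := FractionRing (Polynomial ℂ) with hK
  set φ : ℂ[X] →+* K' := (algebraMap (ℂ[X]) K' : ℂ[X] →+* K') with hφdef
  have hφ : Function.Injective φ := IsFractionRing.injective _ _
  set ψ : ℂ →+* K' := φ.comp C with hψdef
  have hψ : Function.Injective ψ := hφ.comp Polynomial.C_injective
  set M₀ : Matrix (Fin m) (Fin m) ℂ[X] := Xd * A.map C with hM₀
  have hmul : mulmuleyPoly A = M₀.charpoly := rfl
  set Dk : Matrix (Fin m) (Fin m) K' := Xd.map φ with hDk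
  set Bk : Matrix (Fin m) (Fin r) K' := B.map ψ with hBk
  set Ck : Matrix (Fin r) (Fin m) K' := Cc.map ψ with hCk
  have hMk : M₀.map φ = (Dk * Bk) * Ck := by
    rw [hM₀, Matrix.map_mul]
    have h1 : (A.map ⇑C).map ⇑φ = Bk * Ck := by
      rw [Matrix.map_map, ← hBC]
      have : (⇑φ ∘ ⇑C) = ⇑ψ := by rw [hψdef, RingHom.coe_comp]
      rw [this, Matrix.map_mul]
    rw [h1, ← Matrix.mul_assoc]
  set W : Matrix (Fin r) (Fin r) K' := Ck * (Dk * Bk) with hW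
  have hWdet : W.det ≠ 0 := by
    have hceq : Ck = (Rᵀ.map ψ) * (Bᵀ.map ψ) := by
      rw [hCk, hCRB, Matrix.map_mul]
    have hGmap : G.map ⇑φ = (Bᵀ.map ψ) * Dk * Bk := by
      rw [hG, Matrix.map_mul, Matrix.map_mul, Matrix.map_map, Matrix.map_map]
      have : (⇑φ ∘ ⇑C) = ⇑ψ := by rw [hψdef, RingHom.coe_comp]
      rw [this]
    have hWeq : W = (Rᵀ.map ψ) * (G.map ⇑φ) := by
      rw [hW, hceq, hGmap]
      simp only [Matrix.mul_assoc]
    rw [hWeq, Matrix.det_mul]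
    apply mul_ne_zero
    · rw [← RingHom.mapMatrix_apply, ← RingHom.map_det]
      exact fun h0 => hdetR (hψ (by rw [h0, map_zero]))
    · rw [← RingHom.mapMatrix_apply, ← RingHom.map_det]
      exact fun h0 => hGdet (hφ (by rw [h0, map_zero]))
  have hWroot : W.charpoly.rootMultiplicity 0 = 0 := by
    apply Polynomial.rootMultiplicity_eq_zero
    intro hroot
    have hc0 : W.charpoly.coeff 0 = 0 := by
      rw [Polynomial.coeff_zero_eq_eval_zero]; exact hroot
    have h1 := Matrix.det_eq_sign_charpoly_coeff W
    rw [hc0, mul_zero] at h1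
    exact hWdet h1
  have hs : (mulmuleyPoly A).rootMultiplicity 0 = m - r := by
    have h1 : (mulmuleyPoly A).rootMultiplicity 0 =
        ((M₀.map φ).charpoly).rootMultiplicity 0 := by
      rw [Matrix.charpoly_map, ← hmul]
      have := Polynomial.eq_rootMultiplicity_map (p := mulmuleyPoly A) hφ (0 : ℂ[X])
      rw [map_zero] at this
      exact this
    have hkey := mul_charpoly_comm (Dk * Bk) Ck
    have h2 := congrArg (Polynomial.rootMultiplicity (0 : K')) hkey
    have hne1 : ((Dk * Bk) * Ck).charpoly ≠ 0 := (Matrix.charpoly_monic _).ne_zero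
    have hne2 : (W.charpoly : K'[X]) ≠ 0 := (Matrix.charpoly_monic _).ne_zero
    have hXne : ∀ n : ℕ, ((X : K'[X]) ^ n) ≠ 0 := fun n => pow_ne_zero n Polynomial.X_ne_zero
    rw [Polynomial.rootMultiplicity_mul (mul_ne_zero hne1 (hXne r)),
      Polynomial.rootMultiplicity_mul (mul_ne_zero (hXne m) hne2)] at h2
    have hXr : ∀ n : ℕ, ((X : K'[X]) ^ n).rootMultiplicity 0 = n := by
      intro n
      have := Polynomial.rootMultiplicity_X_sub_C_pow (0 : K') n
      simpa using this
    rw [hXr, hXr, hWroot] at h2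
    rw [h1, hMk]
    omega
  rw [hs]
  have hrm : r ≤ m := by simpa using A.rank_le_card_width
  omega
end

section
/- Let A be an m×m′ matrix over ℂ, set N := m + m′, and let B be the symmetric N×N block matrix [[0, A],[Aᵀ, 0]]. Let p_B(Z) ∈ (ℂ[T])[Z] be the Mulmuley polynomial of B and let s be the multiplicity of 0 as a root of p_B(Z). Then N − s = 2·(rank of A); in particular N − s is even and rank A = (N − s)/2. (This is the rank-computation pipeline of Section 2.7 of the paper, combining the symmetrization step with Mulmuley's theorem.) -/
open Matrix

namespace MulmuleyAux

open Matrix Polynomial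

variable {K L : Type*} [Field K] [Field L]

lemma rank_eq_card_of_pinv {m n ι : Type*} [Fintype m] [Fintype n] [Fintype ι]
    [DecidableEq ι] (A : Matrix m n K) (B : Matrix m ι K) (C : Matrix ι n K)
    (B' : Matrix ι m K) (C' : Matrix n ι K)
    (hA : A = B * C) (hB : B' * B = 1) (hC : C * C' = 1) :
    A.rank = Fintype.card ι := by
  refine le_antisymm ?_ ?_
  · calc A.rank = (B * C).rank := by rw [hA]
      _ ≤ B.rank := Matrix.rank_mul_le_left B C
      _ ≤ Fintype.card ι := Matrix.rank_le_card_width B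
  · have h1 : B' * A * C' = 1 := by
      rw [hA]
      simp only [← Matrix.mul_assoc]
      rw [hB, Matrix.one_mul, hC]
    calc Fintype.card ι = (1 : Matrix ι ι K).rank := (Matrix.rank_one).symm
      _ = (B' * (A * C')).rank := by rw [← Matrix.mul_assoc, h1]
      _ ≤ (A * C').rank := Matrix.rank_mul_le_right _ _
      _ ≤ A.rank := Matrix.rank_mul_le_left _ _

lemma exists_pinv {m n : Type*} [Fintype m] [DecidableEq m] [Fintype n] [DecidableEq n]
    (A : Matrix m n K) :
    ∃ (B : Matrix m (Fin A.rank) K) (C : Matrix (Fin A.rank) n K)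
      (B' : Matrix (Fin A.rank) m K) (C' : Matrix n (Fin A.rank) K),
      A = B * C ∧ B' * B = 1 ∧ C * C' = 1 := by
  classical
  set f : (n → K) →ₗ[K] (m → K) := Matrix.toLin' A with hf
  have hAf : LinearMap.toMatrix' f = A := LinearMap.toMatrix'_toLin' A
  have htl : f = A.mulVecLin := by
    apply LinearMap.ext; intro v
    simp [hf, Matrix.toLin'_apply, Matrix.mulVecLin_apply]
  have hrank : Module.finrank K (LinearMap.range f) = A.rank := by
    rw [Matrix.rank, htl]
  let e : (LinearMap.range f) ≃ₗ[K] (Fin A.rank → K) :=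
    LinearEquiv.ofFinrankEq _ _ (by rw [hrank, Module.finrank_fin_fun])
  let bL : (Fin A.rank → K) →ₗ[K] (m → K) :=
    (LinearMap.range f).subtype ∘ₗ (e.symm : (Fin A.rank → K) →ₗ[K] LinearMap.range f)
  let cL : (n → K) →ₗ[K] (Fin A.rank → K) :=
    (e : LinearMap.range f →ₗ[K] (Fin A.rank → K)) ∘ₗ f.rangeRestrict
  have hbc : f = bL ∘ₗ cL := by
    apply LinearMap.ext; intro v
    simp [bL, cL]
  obtain ⟨bInv, hbInv⟩ := bL.exists_leftInverse_of_injective (by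
    rw [LinearMap.ker_eq_bot]
    exact (LinearMap.range f).injective_subtype.comp e.symm.injective)
  obtain ⟨cInv, hcInv⟩ := cL.exists_rightInverse_of_surjective (by
    rw [LinearMap.range_eq_top]
    exact e.surjective.comp f.surjective_rangeRestrict)
  refine ⟨LinearMap.toMatrix' bL, LinearMap.toMatrix' cL, LinearMap.toMatrix' bInv,
    LinearMap.toMatrix' cInv, ?_, ?_, ?_⟩
  · rw [← LinearMap.toMatrix'_comp, ← hbc]; exact hAf.symm
  · rw [← LinearMap.toMatrix'_comp, hbInv, LinearMap.toMatrix'_id]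
  · rw [← LinearMap.toMatrix'_comp, hcInv, LinearMap.toMatrix'_id]

lemma rank_map_ringHom {m n : Type*} [Fintype m] [DecidableEq m] [Fintype n] [DecidableEq n]
    (g : K →+* L) (A : Matrix m n K) : (A.map g).rank = A.rank := by
  obtain ⟨B, C, B', C', h1, h2, h3⟩ := exists_pinv A
  have := rank_eq_card_of_pinv (A.map ⇑g) (B.map ⇑g) (C.map ⇑g) (B'.map ⇑g) (C'.map ⇑g)
    ((congrArg (fun M : Matrix m n K => M.map ⇑g) h1).trans Matrix.map_mul)
    (by rw [← Matrix.map_mul, h2, Matrix.map_one _ g.map_zero g.map_one])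
    (by rw [← Matrix.map_mul, h3, Matrix.map_one _ g.map_zero g.map_one])
  simpa using this

lemma rank_fromBlocks_diag {m n p q : Type*} [Fintype m] [DecidableEq m] [Fintype n]
    [DecidableEq n] [Fintype p] [DecidableEq p] [Fintype q] [DecidableEq q]
    (A : Matrix m n K) (D : Matrix p q K) :
    (Matrix.fromBlocks A 0 0 D).rank = A.rank + D.rank := by
  obtain ⟨B₁, C₁, B₁', C₁', h1, h2, h3⟩ := exists_pinv A
  obtain ⟨B₂, C₂, B₂', C₂', h4, h5, h6⟩ := exists_pinv D
  have := rank_eq_card_of_pinv (Matrix.fromBlocks A 0 0 D)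
    (Matrix.fromBlocks B₁ 0 0 B₂) (Matrix.fromBlocks C₁ 0 0 C₂)
    (Matrix.fromBlocks B₁' 0 0 B₂') (Matrix.fromBlocks C₁' 0 0 C₂')
    (by rw [Matrix.fromBlocks_multiply]; simp [← h1, ← h4])
    (by rw [Matrix.fromBlocks_multiply]; simp [h2, h5, Matrix.fromBlocks_one])
    (by rw [Matrix.fromBlocks_multiply]; simp [h3, h6, Matrix.fromBlocks_one])
  simpa using this

lemma rank_fromBlocks_antidiag {m n : Type*} [Fintype m] [DecidableEq m] [Fintype n]
    [DecidableEq n] (A : Matrix m n K) :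
    (Matrix.fromBlocks (0 : Matrix m m K) A Aᵀ (0 : Matrix n n K)).rank = 2 * A.rank := by
  classical
  set F1 : Matrix (m ⊕ n) (n ⊕ m) K := Matrix.fromBlocks A 0 0 Aᵀ with hF1
  set J : Matrix (n ⊕ m) (m ⊕ n) K := Matrix.fromBlocks 0 1 1 0 with hJ
  set J' : Matrix (m ⊕ n) (n ⊕ m) K := Matrix.fromBlocks 0 1 1 0 with hJ'
  have hprod : F1 * J = Matrix.fromBlocks (0 : Matrix m m K) A Aᵀ (0 : Matrix n n K) := by
    rw [hF1, hJ, Matrix.fromBlocks_multiply]; simp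
  have hJJ' : J * J' = 1 := by
    rw [hJ, hJ', Matrix.fromBlocks_multiply]; simp [Matrix.fromBlocks_one]
  have h1 : (F1 * J).rank ≤ F1.rank := Matrix.rank_mul_le_left _ _
  have h2 : F1.rank ≤ (F1 * J).rank := by
    calc F1.rank = (F1 * J * J').rank := by rw [Matrix.mul_assoc, hJJ', Matrix.mul_one]
      _ ≤ (F1 * J).rank := Matrix.rank_mul_le_left _ _
  have h3 : F1.rank = A.rank + Aᵀ.rank := rank_fromBlocks_diag A Aᵀ
  rw [← hprod]
  rw [le_antisymm h1 h2, h3, Matrix.rank_transpose]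
  ring


noncomputable abbrev Ffield : Type := FractionRing (Polynomial ℂ)

noncomputable def fRF : Polynomial ℂ →+* Ffield := algebraMap _ _

noncomputable def gCF : ℂ →+* Ffield := fRF.comp (Polynomial.C)

lemma fRF_inj : Function.Injective fRF := IsFractionRing.injective _ _

lemma key {N : ℕ} (B : Matrix (Fin N) (Fin N) ℂ) (hB : Bᵀ = B) (v : Fin N → Ffield)
    (h : (B.map ⇑gCF * Matrix.diagonal (fun i : Fin N => fRF Polynomial.X ^ (i : ℕ))
        * B.map ⇑gCF) *ᵥ v = 0) :
    B.map ⇑gCF *ᵥ v = 0 := by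
  classical
  by_contra hw
  set Bf : Matrix (Fin N) (Fin N) Ffield := B.map ⇑gCF with hBf
  set Dm : Matrix (Fin N) (Fin N) Ffield :=
    Matrix.diagonal (fun i : Fin N => fRF Polynomial.X ^ (i : ℕ)) with hDm
  have hBfT : Bfᵀ = Bf := by
    rw [hBf, ← Matrix.transpose_map, hB]
  -- clear denominators of v
  obtain ⟨b, hb⟩ := IsLocalization.exist_integer_multiples
    (nonZeroDivisors (Polynomial ℂ)) Finset.univ v
  choose p hp using fun i => hb i (Finset.mem_univ i)
  set c : Ffield := fRF (b : Polynomial ℂ) with hc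
  have hc0 : c ≠ 0 := by
    intro h0
    exact nonZeroDivisors.coe_ne_zero b (fRF_inj (h0.trans (map_zero fRF).symm))
  set P : Fin N → Polynomial ℂ := (B.map ⇑(Polynomial.C : ℂ →+* Polynomial ℂ)) *ᵥ p with hP
  have hmapBC : (B.map ⇑(Polynomial.C : ℂ →+* Polynomial ℂ)).map ⇑fRF = Bf := by
    rw [Matrix.map_map, hBf]; rfl
  have hfPi : ∀ i, fRF (P i) = c * (Bf *ᵥ v) i := by
    intro i
    calc fRF (P i) = ((B.map ⇑(Polynomial.C : ℂ →+* Polynomial ℂ)).map ⇑fRF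
          *ᵥ (⇑fRF ∘ p)) i := RingHom.map_mulVec fRF _ p i
      _ = (Bf *ᵥ (c • v)) i := by
          rw [hmapBC]
          congr 1
          funext j
          rw [Function.comp_apply, Pi.smul_apply, smul_eq_mul, hc]
          exact (hp j).trans (Algebra.smul_def _ _)
      _ = c * (Bf *ᵥ v) i := by rw [Matrix.mulVec_smul, Pi.smul_apply, smul_eq_mul]
  have hP0 : P ≠ 0 := by
    intro h0
    apply hw
    funext i
    have h1 := hfPi i
    rw [h0, Pi.zero_apply, map_zero] at h1
    have := (mul_eq_zero.mp h1.symm).resolve_left hc0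
    simpa using this
  -- minimal trailing degree
  set Fs : Finset (Fin N) := Finset.univ.filter (fun i => P i ≠ 0) with hFs
  have hFsne : Fs.Nonempty := by
    obtain ⟨i, hi⟩ := Function.ne_iff.mp hP0
    refine ⟨i, ?_⟩
    simp only [hFs, Finset.mem_filter, Finset.mem_univ, true_and]
    simpa using hi
  set e : ℕ := Fs.inf' hFsne (fun i => (P i).natTrailingDegree) with he
  obtain ⟨i0, hi0mem, hi0⟩ := Finset.exists_mem_eq_inf' hFsne (fun i => (P i).natTrailingDegree)
  set z : Fin N → ℂ := fun i => (P i).coeff e with hz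
  have hz0 : z i0 ≠ 0 := by
    have hPi0 : P i0 ≠ 0 := by simpa [hFs] using hi0mem
    have : (P i0).trailingCoeff ≠ 0 := mt Polynomial.trailingCoeff_eq_zero.mp hPi0
    simpa [hz, Polynomial.trailingCoeff, he, ← hi0] using this
  have hcoeff_small : ∀ i : Fin N, ∀ d, d < e → (P i).coeff d = 0 := by
    intro i d hd
    by_cases hPi : P i = 0
    · simp [hPi]
    · refine Polynomial.coeff_eq_zero_of_lt_natTrailingDegree (lt_of_lt_of_le hd ?_)
      exact Finset.inf'_le _ (by simp [hFs, hPi])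
  set y : Fin N → ℂ := fun j => (p j).coeff e with hy
  have hzy : B *ᵥ y = z := by
    funext i
    show (B *ᵥ y) i = (P i).coeff e
    rw [hP]
    simp only [Matrix.mulVec, dotProduct, Matrix.map_apply]
    rw [Polynomial.finset_sum_coeff]
    exact Finset.sum_congr rfl fun j _ => by rw [Polynomial.coeff_C_mul]
  -- orthogonality identity over ℂ[X]
  have horth : (fun i => (Polynomial.C (z i) : Polynomial ℂ)) ⬝ᵥ
      ((Matrix.diagonal (fun i : Fin N => (Polynomial.X : Polynomial ℂ) ^ (i : ℕ))) *ᵥ P) = 0 := by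
    apply fRF_inj
    rw [map_zero, RingHom.map_dotProduct]
    have hDP : ⇑fRF ∘ ((Matrix.diagonal (fun i : Fin N =>
        (Polynomial.X : Polynomial ℂ) ^ (i : ℕ))) *ᵥ P) = Dm *ᵥ (⇑fRF ∘ P) := by
      funext i
      rw [Function.comp_apply, RingHom.map_mulVec]
      congr 1
      rw [Matrix.diagonal_map (map_zero fRF), hDm]
      simp [map_pow]
    rw [hDP]
    have h1 : ⇑fRF ∘ (fun i => Polynomial.C (z i)) = fun i => gCF (z i) := rfl
    have h2 : ⇑fRF ∘ P = c • (Bf *ᵥ v) := by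
      funext i
      rw [Function.comp_apply, hfPi i, Pi.smul_apply, smul_eq_mul]
    rw [h1, h2, Matrix.mulVec_smul, dotProduct_smul, smul_eq_mul]
    suffices hzw : (fun i => gCF (z i)) ⬝ᵥ (Dm *ᵥ (Bf *ᵥ v)) = 0 by rw [hzw, mul_zero]
    have h3 : Bf *ᵥ (Dm *ᵥ (Bf *ᵥ v)) = 0 := by
      rw [Matrix.mulVec_mulVec, Matrix.mulVec_mulVec]
      exact h
    have h4 : Bf *ᵥ (⇑gCF ∘ y) = fun i => gCF (z i) := by
      funext i
      rw [← hzy]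
      exact (RingHom.map_mulVec gCF B y i).symm
    rw [← h4]
    calc (Bf *ᵥ (⇑gCF ∘ y)) ⬝ᵥ (Dm *ᵥ (Bf *ᵥ v))
        = (Dm *ᵥ (Bf *ᵥ v)) ⬝ᵥ (Bf *ᵥ (⇑gCF ∘ y)) := dotProduct_comm _ _
      _ = ((Dm *ᵥ (Bf *ᵥ v)) ᵥ* Bf) ⬝ᵥ (⇑gCF ∘ y) := Matrix.dotProduct_mulVec _ _ _
      _ = (Bf *ᵥ (Dm *ᵥ (Bf *ᵥ v))) ⬝ᵥ (⇑gCF ∘ y) := by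
            have h5 : ((Dm *ᵥ (Bf *ᵥ v)) ᵥ* Bf) = Bf *ᵥ (Dm *ᵥ (Bf *ᵥ v)) := by
              rw [← Matrix.mulVec_transpose, hBfT]
            rw [h5]
      _ = 0 := by rw [h3, zero_dotProduct]
  -- coefficient extraction
  set Js : Finset (Fin N) := Finset.univ.filter (fun j => z j ≠ 0) with hJs
  have hJsne : Js.Nonempty := ⟨i0, by simp [hJs, hz0]⟩
  set jst : Fin N := Js.min' hJsne with hjst
  have hjz : z jst ≠ 0 := by
    have := Finset.min'_mem Js hJsne
    simpa [hJs] using this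
  have hmin : ∀ j ∈ Js, jst ≤ j := fun j hj => Finset.min'_le _ _ hj
  set d : ℕ := (jst : ℕ) + e with hd
  have hco := congrArg (fun q : Polynomial ℂ => q.coeff d) horth
  simp only [Polynomial.coeff_zero] at hco
  rw [dotProduct] at hco
  rw [Polynomial.finset_sum_coeff] at hco
  have hterm : ∀ i : Fin N,
      (Polynomial.C (z i) * ((Matrix.diagonal (fun i : Fin N =>
        (Polynomial.X : Polynomial ℂ) ^ (i : ℕ))) *ᵥ P) i).coeff d
      = if (i : ℕ) ≤ d then z i * (P i).coeff (d - (i : ℕ)) else 0 := by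
    intro i
    rw [Matrix.mulVec_diagonal]
    have : Polynomial.C (z i) * ((Polynomial.X : Polynomial ℂ) ^ (i : ℕ) * P i)
        = (Polynomial.C (z i) * P i) * (Polynomial.X : Polynomial ℂ) ^ (i : ℕ) := by ring
    rw [this, Polynomial.coeff_mul_X_pow']
    split_ifs with hle
    · rw [Polynomial.coeff_C_mul]
    · rfl
  rw [Finset.sum_congr rfl (fun i _ => hterm i)] at hco
  rw [Finset.sum_eq_single jst] at hco
  · rw [if_pos (Nat.le_add_right _ _)] at hco
    have : d - (jst : ℕ) = e := by omega
    rw [this] at hco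
    exact hjz (by
      have : z jst * z jst = 0 := hco
      exact (mul_self_eq_zero).mp this)
  · intro j _ hj
    by_cases hzj : z j = 0
    · simp [hzj]
    · have hjmem' : j ∈ Js := by simp [hJs, hzj]
      have hlt : (jst : ℕ) < (j : ℕ) :=
        lt_of_le_of_ne (hmin j hjmem') (fun hh => hj (Fin.ext hh).symm)
      by_cases hle : (j : ℕ) ≤ d
      · rw [if_pos hle, hcoeff_small j _ (by omega), mul_zero]
      · rw [if_neg hle]
  · intro hnot
    exact absurd (Finset.mem_univ jst) hnot


lemma natTrailingDegree_map_of_injective {R S : Type*} [Semiring R] [Semiring S]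
    {f : R →+* S} (hf : Function.Injective f) (p : Polynomial R) :
    (p.map f).natTrailingDegree = p.natTrailingDegree := by
  simp [Polynomial.natTrailingDegree, Polynomial.trailingDegree,
    Polynomial.support_map_of_injective p hf]

lemma main_count {N : ℕ} (B : Matrix (Fin N) (Fin N) ℂ) (hB : Bᵀ = B) :
    (Matrix.charpoly ((Matrix.diagonal fun i : Fin N => (Polynomial.X : Polynomial ℂ) ^ (i : ℕ)) *
      B.map Polynomial.C)).rootMultiplicity 0 + B.rank = N := by
  classical
  set Mr : Matrix (Fin N) (Fin N) (Polynomial ℂ) :=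
    (Matrix.diagonal fun i : Fin N => (Polynomial.X : Polynomial ℂ) ^ (i : ℕ)) *
      B.map Polynomial.C with hMr
  set Bf : Matrix (Fin N) (Fin N) Ffield := B.map ⇑gCF with hBf
  set Dm : Matrix (Fin N) (Fin N) Ffield :=
    Matrix.diagonal (fun i : Fin N => fRF Polynomial.X ^ (i : ℕ)) with hDm
  set Mf : Matrix (Fin N) (Fin N) Ffield := Dm * Bf with hMf
  have hDmap : (Matrix.diagonal fun i : Fin N => (Polynomial.X : Polynomial ℂ) ^ (i : ℕ)).map ⇑fRF
      = Dm := by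
    rw [Matrix.diagonal_map (map_zero fRF), hDm]
    simp [map_pow]
  have hBmap : (B.map Polynomial.C).map ⇑fRF = Bf := by
    rw [Matrix.map_map, hBf]; rfl
  have hMrMf : Mr.map ⇑fRF = Mf := by
    rw [hMr, Matrix.map_mul, hDmap, hBmap, hMf]
  have h1 : (Matrix.charpoly Mr).rootMultiplicity 0 = (Matrix.charpoly Mf).natTrailingDegree := by
    rw [Polynomial.rootMultiplicity_eq_natTrailingDegree', ← hMrMf, Matrix.charpoly_map]
    exact (natTrailingDegree_map_of_injective fRF_inj _).symm
  set φ : Module.End Ffield (Fin N → Ffield) := Matrix.toLin' Mf with hφ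
  have hcp : (Matrix.charpoly Mf) = LinearMap.charpoly φ := by
    rw [← LinearMap.charpoly_toMatrix φ (Pi.basisFun Ffield (Fin N)),
      LinearMap.toMatrix_eq_toMatrix', hφ, LinearMap.toMatrix'_toLin']
  have hτ : fRF Polynomial.X ≠ 0 :=
    fun h0 => Polynomial.X_ne_zero (fRF_inj (h0.trans (map_zero fRF).symm))
  have hDinj : ∀ y : Fin N → Ffield, Dm *ᵥ y = 0 → y = 0 := by
    intro y hy
    funext i
    have h2 := congrFun hy i
    rw [hDm, Matrix.mulVec_diagonal] at h2
    exact (mul_eq_zero.mp h2).resolve_left (pow_ne_zero _ hτ)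
  have hker2 : ∀ x : Fin N → Ffield, φ (φ x) = 0 → φ x = 0 := by
    intro x hx
    rw [hφ, Matrix.toLin'_apply, Matrix.toLin'_apply, Matrix.mulVec_mulVec] at hx
    have hassoc : Mf * Mf = Dm * (Bf * Dm * Bf) := by
      rw [hMf]; simp only [Matrix.mul_assoc]
    rw [hassoc, ← Matrix.mulVec_mulVec] at hx
    have h2 := hDinj _ hx
    have h3 := key B hB x h2
    rw [hφ, Matrix.toLin'_apply, hMf, ← Matrix.mulVec_mulVec, h3, Matrix.mulVec_zero]
  have hstab : ∀ k : ℕ, LinearMap.ker (φ ^ k) ≤ LinearMap.ker φ := by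
    intro k
    induction k with
    | zero =>
      intro x hx
      have hx0 : x = 0 := by simpa using hx
      simp [hx0]
    | succ k ih =>
      intro x hx
      have h1' : (φ ^ k) (φ x) = 0 := by
        have h2' := LinearMap.mem_ker.mp hx
        rw [pow_succ, Module.End.mul_apply] at h2'
        exact h2'
      have h2'' : φ (φ x) = 0 := LinearMap.mem_ker.mp (ih (LinearMap.mem_ker.mpr h1'))
      exact LinearMap.mem_ker.mpr (hker2 x h2'')
  have hMG : φ.maxGenEigenspace 0 = LinearMap.ker φ := by
    rw [← Module.End.iSup_genEigenspace_eq]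
    have hgen : ∀ k : ℕ, (φ.genEigenspace 0) (k : ℕ∞) = LinearMap.ker (φ ^ k) := by
      intro k; rw [Module.End.genEigenspace_nat]; simp
    apply le_antisymm
    · exact iSup_le fun k => by rw [hgen k]; exact hstab k
    · refine le_iSup_of_le 1 ?_
      rw [hgen 1, pow_one]
  have hcount : (LinearMap.charpoly φ).natTrailingDegree + Mf.rank = N := by
    have hfr := LinearMap.finrank_maxGenEigenspace_zero_eq φ
    rw [hMG] at hfr
    have hrn := LinearMap.finrank_range_add_finrank_ker φ
    have hml : Matrix.toLin' Mf = Mf.mulVecLin := by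
      apply LinearMap.ext; intro x
      simp [Matrix.toLin'_apply, Matrix.mulVecLin_apply]
    have hrange : Module.finrank Ffield (LinearMap.range φ) = Mf.rank := by
      rw [Matrix.rank, hφ, hml]
    rw [hrange, Module.finrank_fin_fun] at hrn
    omega
  have hrk : Mf.rank = B.rank := by
    have hDu : IsUnit Dm.det := by
      rw [hDm, Matrix.det_diagonal]
      exact isUnit_iff_ne_zero.mpr (Finset.prod_ne_zero_iff.mpr (fun i _ => pow_ne_zero _ hτ))
    rw [hMf, Matrix.rank_mul_eq_right_of_isUnit_det Dm Bf hDu, hBf, rank_map_ringHom]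
  rw [h1, hcp, ← hrk]
  exact hcount


end MulmuleyAux

open MulmuleyAux Polynomial in
/-- The rank-computation pipeline: for an `m × m′` matrix `A` over `ℂ`,
let `N := m + m′` and let `B` be the symmetric `N × N` block matrix
`[[0, A],[Aᵀ, 0]]`. If `s` is the multiplicity of `0` as a root of the Mulmuley
polynomial of `B`, then `N − s = 2 · rank A`; in particular `N − s` is even and
`rank A = (N − s)/2`. -/
theorem rank_via_mulmuley_of_symmetrized {m m' : ℕ} (A : Matrix (Fin m) (Fin m') ℂ) :
    ∀ s : ℕ,
      s = (mulmuleyPoly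
            ((Matrix.reindex finSumFinEquiv finSumFinEquiv)
              (Matrix.fromBlocks (0 : Matrix (Fin m) (Fin m) ℂ) A
                Aᵀ (0 : Matrix (Fin m') (Fin m') ℂ)))).rootMultiplicity 0 →
      m + m' - s = 2 * A.rank ∧ Even (m + m' - s) ∧ A.rank = (m + m' - s) / 2 := by
  classical
  intro s hs
  set B0 : Matrix (Fin (m + m')) (Fin (m + m')) ℂ :=
    (Matrix.reindex finSumFinEquiv finSumFinEquiv)
      (Matrix.fromBlocks (0 : Matrix (Fin m) (Fin m) ℂ) A
        Aᵀ (0 : Matrix (Fin m') (Fin m') ℂ)) with hB0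
  have hsym : B0ᵀ = B0 := by
    rw [hB0, Matrix.transpose_reindex, Matrix.fromBlocks_transpose]
    simp
  have hrank : B0.rank = 2 * A.rank := by
    rw [hB0, Matrix.rank_reindex]
    exact rank_fromBlocks_antidiag A
  have hmain := main_count B0 hsym
  have hs' : s + B0.rank = m + m' := by
    rw [hs]
    simp only [mulmuleyPoly]
    exact hmain
  rw [hrank] at hs'
  refine ⟨by omega, ⟨A.rank, by omega⟩, by omega⟩
end

section
/- Let A be a symmetric N×N matrix over ℂ, let p_A(Z) ∈ (ℂ[T])[Z] be its Mulmuley polynomial, and let 0 ≤ k ≤ N. Then Z^k divides p_A(Z) if and only if the kernel of A has dimension at least k. (This equivalence is the criterion used in the correctness proofs of the paper's Smoothness Test (Proposition 6.1) and of the construction of generic hyperplanes (Proposition 7.2): the nullity of a Jacobian-type matrix exceeds a threshold exactly when the corresponding low-order coefficients of the Mulmuley polynomial vanish.) -/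
open Polynomial Matrix


variable {R : Type*} [CommRing R] [IsDomain R]

lemma charpoly_image {n : Type*} [Fintype n] [DecidableEq n] {L : Type*} [CommRing L]
    (φ : Polynomial R →+* L) (M : Matrix n n R) :
    φ M.charpoly = Matrix.det ((φ Polynomial.X) • (1 : Matrix n n L) - M.map (φ.comp Polynomial.C)) := by
  rw [Matrix.charpoly, RingHom.map_det]
  congr 1
  ext i j
  simp [Matrix.charmatrix_apply, smul_one_eq_diagonal, Matrix.diagonal_apply, Matrix.one_apply]
  split <;> simp

lemma charpoly_mul_comm_rect {N r : ℕ} (hr : r ≤ N)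
    (M : Matrix (Fin N) (Fin r) R) (Y : Matrix (Fin r) (Fin N) R) :
    (M * Y).charpoly = Polynomial.X ^ (N - r) * (Y * M).charpoly := by
  classical
  set L := FractionRing (Polynomial R)
  set φ : Polynomial R →+* L := algebraMap (Polynomial R) L with hφ
  have hinj : Function.Injective φ := IsFractionRing.injective _ _
  apply hinj
  set z : L := φ Polynomial.X with hz
  have hz0 : z ≠ 0 := by
    simp only [hz, Ne, map_eq_zero_iff φ hinj]
    exact Polynomial.X_ne_zero
  set ψ : R →+* L := φ.comp Polynomial.C with hψ
  have key : ∀ {m : ℕ} (W : Matrix (Fin m) (Fin m) R),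
      z • (1 : Matrix (Fin m) (Fin m) L) - W.map ψ
        = z • ((1 : Matrix (Fin m) (Fin m) L) - z⁻¹ • W.map ψ) := by
    intro m W
    rw [smul_sub, smul_inv_smul₀ hz0]
  have h1 : φ (M * Y).charpoly = z ^ N * Matrix.det (1 - z⁻¹ • ((M * Y).map ψ)) := by
    rw [charpoly_image φ, key, Matrix.det_smul]
    simp [Fintype.card_fin]
  have h2 : φ (Y * M).charpoly = z ^ r * Matrix.det (1 - z⁻¹ • ((Y * M).map ψ)) := by
    rw [charpoly_image φ, key, Matrix.det_smul]
    simp [Fintype.card_fin]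
  have hdet : Matrix.det (1 - z⁻¹ • ((M * Y).map ψ)) = Matrix.det (1 - z⁻¹ • ((Y * M).map ψ)) := by
    have hmap : (M * Y).map ψ = M.map ψ * Y.map ψ := Matrix.map_mul
    have hmap2 : (Y * M).map ψ = Y.map ψ * M.map ψ := Matrix.map_mul
    have e1 : (1 : Matrix (Fin N) (Fin N) L) + ((-z⁻¹) • M.map ψ) * Y.map ψ
        = 1 - z⁻¹ • ((M * Y).map ψ) := by
      rw [hmap, Matrix.smul_mul, neg_smul, ← sub_eq_add_neg]
    have e2 : (1 : Matrix (Fin r) (Fin r) L) + Y.map ψ * ((-z⁻¹) • M.map ψ)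
        = 1 - z⁻¹ • ((Y * M).map ψ) := by
      rw [hmap2, Matrix.mul_smul, neg_smul, ← sub_eq_add_neg]
    rw [← e1, ← e2, Matrix.det_one_add_mul_comm]
  have := h1.trans (by rw [hdet])
  rw [_root_.map_mul, map_pow, h2, ← hz]
  rw [this, ← mul_assoc, ← pow_add]
  congr 2
  omega


lemma gram_det_ne_zero {r N : ℕ} (u : Fin r → Fin N → ℂ) (t : Fin r → Fin N)
    (ht : Function.Injective t) (hu : ∀ a, u a (t a) ≠ 0)
    (htop : ∀ a i, t a < i → u a i = 0) :
    (((Matrix.of u).map Polynomial.C) *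
      (Matrix.diagonal fun i : Fin N => (Polynomial.X : Polynomial ℂ) ^ (i : ℕ)) *
      ((Matrix.of u).map Polynomial.C)ᵀ).det ≠ 0 := by
  classical
  set D := Matrix.diagonal fun i : Fin N => (Polynomial.X : Polynomial ℂ) ^ (i : ℕ) with hD
  set Gm : Matrix (Fin r) (Fin r) (Polynomial ℂ) :=
    Matrix.of fun a b => ∑ i : Fin N, Polynomial.C (u a i * u b i) * Polynomial.X ^ (i : ℕ)
    with hGm
  have hstep : ((Matrix.of u).map Polynomial.C) * D
      = Matrix.of fun a j => Polynomial.C (u a j) * Polynomial.X ^ (j : ℕ) := by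
    ext a j
    simp [hD, Matrix.mul_diagonal]
  have hprod : ((Matrix.of u).map Polynomial.C) * D * ((Matrix.of u).map Polynomial.C)ᵀ = Gm := by
    rw [hstep]
    apply Matrix.ext
    intro a b
    simp only [Matrix.mul_apply, Matrix.map_apply, Matrix.transpose_apply, Matrix.of_apply, hGm]
    refine Finset.sum_congr rfl fun i _ => ?_
    rw [Polynomial.C_mul]
    ring
  rw [hprod]
  -- coefficient formula
  have hcoeff : ∀ a b m, (Gm a b).coeff m
      = ∑ i : Fin N, (if m = (i : ℕ) then u a i * u b i else 0) := by
    intro a b m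
    rw [hGm]
    simp only [Matrix.of_apply, Polynomial.finset_sum_coeff, Polynomial.coeff_C_mul,
      Polynomial.coeff_X_pow]
    refine Finset.sum_congr rfl fun i _ => ?_
    split <;> simp
  have hdegle : ∀ a b, (Gm a b).natDegree ≤ min (t a : ℕ) (t b : ℕ) := by
    intro a b
    rw [Polynomial.natDegree_le_iff_coeff_eq_zero]
    intro m hm
    rw [hcoeff]
    refine Finset.sum_eq_zero fun i _ => ?_
    split
    · next h =>
      rcases lt_or_ge (t a : ℕ) (i : ℕ) with hlt | hle
      · rw [htop a i (by rwa [Fin.lt_def]), zero_mul]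
      · have : (t b : ℕ) < (i : ℕ) := by omega
        rw [htop b i (by rwa [Fin.lt_def]), mul_zero]
    · rfl
  have hcd : ∀ a, (Gm a a).coeff (t a : ℕ) = u a (t a) * u a (t a) := by
    intro a
    rw [hcoeff]
    rw [Finset.sum_eq_single (t a)]
    · simp
    · intro i _ hne
      have : ¬ ((t a : ℕ) = (i : ℕ)) := fun h => hne (Fin.ext h.symm)
      simp [this]
    · simp
  have hcdne : ∀ a, (Gm a a).coeff (t a : ℕ) ≠ 0 := by
    intro a
    rw [hcd]
    exact mul_ne_zero (hu a) (hu a)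
  have hGmne : ∀ a, Gm a a ≠ 0 := by
    intro a h
    exact hcdne a (by rw [h]; simp)
  have hdeg : ∀ a, (Gm a a).natDegree = (t a : ℕ) := by
    intro a
    refine le_antisymm (by simpa using hdegle a a) (Polynomial.le_natDegree_of_ne_zero (hcdne a))
  set d : ℕ := ∑ a, (t a : ℕ) with hd
  have hid : (∏ a, Gm a a).coeff d = ∏ a, (u a (t a) * u a (t a)) := by
    have h1 : (∏ a, Gm a a).natDegree = d := by
      rw [Polynomial.natDegree_prod _ _ (fun a _ => hGmne a)]
      exact Finset.sum_congr rfl fun a _ => hdeg a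
    have h2 : (∏ a, Gm a a).coeff d = (∏ a, Gm a a).leadingCoeff := by
      rw [Polynomial.leadingCoeff, h1]
    rw [h2, Polynomial.leadingCoeff_prod]
    refine Finset.prod_congr rfl fun a _ => ?_
    rw [Polynomial.leadingCoeff, hdeg a, hcd a]
  have hother : ∀ σ : Equiv.Perm (Fin r), σ ≠ 1 → (∏ i, Gm (σ i) i).coeff d = 0 := by
    intro σ hσ
    apply Polynomial.coeff_eq_zero_of_natDegree_lt
    have step1 : (∏ i, Gm (σ i) i).natDegree ≤ ∑ i, min (t (σ i) : ℕ) (t i : ℕ) :=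
      le_trans (Polynomial.natDegree_prod_le _ _)
        (Finset.sum_le_sum fun i _ => hdegle (σ i) i)
    refine lt_of_le_of_lt step1 ?_
    have hex : ∃ i : Fin r, (t (σ i) : ℕ) < (t i : ℕ) := by
      by_contra hcon
      push_neg at hcon
      have hsum : (∑ i, (t (σ i) : ℕ)) = ∑ i, (t i : ℕ) :=
        Equiv.sum_comp σ fun i => (t i : ℕ)
      have heq : ∀ i ∈ Finset.univ, (t i : ℕ) = (t (σ i) : ℕ) :=
        (Finset.sum_eq_sum_iff_of_le fun i _ => hcon i).mp hsum.symm
      apply hσ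
      apply Equiv.ext
      intro i
      have := heq i (Finset.mem_univ i)
      have h2 : σ i = i := ht (Fin.ext this.symm)
      simpa using h2
    obtain ⟨i0, hi0⟩ := hex
    refine Finset.sum_lt_sum (fun i _ => min_le_right _ _) ⟨i0, Finset.mem_univ _, ?_⟩
    exact lt_of_le_of_lt (min_le_left _ _) hi0
  have hdetc : Gm.det.coeff d = ∏ a, (u a (t a) * u a (t a)) := by
    rw [Matrix.det_apply']
    rw [Polynomial.finset_sum_coeff]
    rw [Finset.sum_eq_single (1 : Equiv.Perm (Fin r))]
    · simp [hid]
    · intro σ _ hσ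
      rw [← Polynomial.C_eq_intCast, Polynomial.coeff_C_mul, hother σ hσ, mul_zero]
    · simp
  intro h0
  have : Gm.det.coeff d ≠ 0 := by
    rw [hdetc]
    exact Finset.prod_ne_zero_iff.mpr fun a _ => mul_ne_zero (hu a) (hu a)
  exact this (by rw [h0]; simp)

lemma exists_adapted_basis {N : ℕ} :
    ∀ (r : ℕ) (W : Submodule ℂ (Fin N → ℂ)), Module.finrank ℂ W = r →
    ∃ (u : Fin r → Fin N → ℂ) (t : Fin r → Fin N),
      Function.Injective t ∧ (∀ a, u a (t a) ≠ 0) ∧ (∀ a i, t a < i → u a i = 0) ∧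
      Submodule.span ℂ (Set.range u) = W := by
  intro r
  induction r with
  | zero =>
    intro W hW
    refine ⟨Fin.elim0, Fin.elim0, fun a => a.elim0, fun a => a.elim0, fun a => a.elim0, ?_⟩
    rw [Set.range_eq_empty, Submodule.span_empty]
    exact (Submodule.finrank_eq_zero.mp hW).symm
  | succ r IH =>
    intro W hW
    classical
    have hWbot : W ≠ ⊥ := by
      intro h
      rw [h] at hW
      simp at hW
    obtain ⟨v0, hv0W, hv0⟩ := Submodule.exists_mem_ne_zero_of_ne_bot hWbot
    have hJne : ∃ j : Fin N, ∃ v ∈ W, v j ≠ 0 := by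
      obtain ⟨j, hj⟩ := Function.ne_iff.mp hv0
      exact ⟨j, v0, hv0W, hj⟩
    set J : Finset (Fin N) := Finset.univ.filter (fun j => ∃ v ∈ W, v j ≠ 0) with hJ
    have hJne' : J.Nonempty := by
      obtain ⟨j, hj⟩ := hJne
      exact ⟨j, by simp [hJ, hj]⟩
    set js : Fin N := J.max' hJne' with hjs
    have hjsJ : js ∈ J := J.max'_mem hJne'
    obtain ⟨w, hwW, hwjs⟩ : ∃ v ∈ W, v js ≠ 0 := by
      have := Finset.mem_filter.mp hjsJ
      exact this.2
    have P1 : ∀ v ∈ W, ∀ i : Fin N, js < i → v i = 0 := by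
      intro v hv i hi
      by_contra h
      have hiJ : i ∈ J := by simp [hJ]; exact ⟨v, hv, h⟩
      exact absurd (J.le_max' i hiJ) (not_le.mpr hi)
    set φ : W →ₗ[ℂ] ℂ := (LinearMap.proj js).comp W.subtype with hφ
    have hφrange : LinearMap.range φ = ⊤ := by
      rw [LinearMap.range_eq_top]
      intro c
      refine ⟨(c / w js) • ⟨w, hwW⟩, ?_⟩
      simp [hφ]
      field_simp
    have hker : Module.finrank ℂ (LinearMap.ker φ) = r := by
      have := LinearMap.finrank_range_add_finrank_ker φ
      rw [hφrange, hW] at this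
      simp [finrank_top] at this
      omega
    set W' : Submodule ℂ (Fin N → ℂ) := (LinearMap.ker φ).map W.subtype with hW'
    have hW'rank : Module.finrank ℂ W' = r := by
      rw [hW', Submodule.finrank_map_subtype_eq]
      exact hker
    have hW'le : W' ≤ W := by
      rintro x ⟨y, hy, rfl⟩
      exact y.2
    have hW'mem : ∀ x ∈ W', x js = 0 := by
      rintro x ⟨y, hy, rfl⟩
      exact LinearMap.mem_ker.mp hy
    have hW'mem' : ∀ x, x ∈ W → x js = 0 → x ∈ W' := by
      intro x hx hxjs
      exact ⟨⟨x, hx⟩, LinearMap.mem_ker.mpr hxjs, rfl⟩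
    obtain ⟨u', t', ht'inj, hu't', htop', hspan'⟩ := IH W' hW'rank
    have hu'W' : ∀ a, u' a ∈ W' := by
      intro a
      rw [← hspan']
      exact Submodule.subset_span ⟨a, rfl⟩
    refine ⟨Fin.cons w u', Fin.cons js t', ?_, ?_, ?_, ?_⟩
    · intro a b hab
      induction a using Fin.cases with
      | zero =>
        induction b using Fin.cases with
        | zero => rfl
        | succ b =>
          exfalso
          simp only [Fin.cons_zero, Fin.cons_succ] at hab
          exact hu't' b (by rw [← hab] at *; exact hW'mem _ (hu'W' b) ▸ (hW'mem _ (hu'W' b)))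
      | succ a =>
        induction b using Fin.cases with
        | zero =>
          exfalso
          simp only [Fin.cons_zero, Fin.cons_succ] at hab
          exact hu't' a (by rw [hab] at *; exact hW'mem _ (hu'W' a))
        | succ b =>
          simp only [Fin.cons_succ] at hab
          rw [ht'inj hab]
    · intro a
      induction a using Fin.cases with
      | zero => simpa using hwjs
      | succ a => simpa using hu't' a
    · intro a i hi
      induction a using Fin.cases with
      | zero =>
        simp only [Fin.cons_zero] at hi ⊢
        exact P1 w hwW i hi
      | succ a =>
        simp only [Fin.cons_succ] at hi ⊢
        exact htop' a i hi
    · rw [Fin.range_cons, Submodule.span_insert, hspan']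
      apply le_antisymm
      · apply sup_le
        · rwa [Submodule.span_singleton_le_iff_mem]
        · exact hW'le
      · intro v hv
        have h1 : v - (v js / w js) • w ∈ W' :=
          hW'mem' _ (Submodule.sub_mem W hv (Submodule.smul_mem W _ hwW))
            (by simp only [Pi.sub_apply, Pi.smul_apply, smul_eq_mul, div_mul_cancel₀ _ hwjs, sub_self])
        have : v = (v js / w js) • w + (v - (v js / w js) • w) := by abel
        rw [this]
        exact Submodule.add_mem _ (Submodule.mem_sup_left (Submodule.mem_span_singleton.mpr ⟨_, rfl⟩))
          (Submodule.mem_sup_right h1)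

/-- For a symmetric `N × N` matrix `A` over `ℂ` with Mulmuley polynomial
`p_A(Z)` and `0 ≤ k ≤ N`: `Z^k` divides `p_A(Z)` if and only if the kernel
of `A` has dimension at least `k`. -/
theorem pow_dvd_mulmuley_iff_le_finrank_ker {N : ℕ} (A : Matrix (Fin N) (Fin N) ℂ)
    (hA : A.IsSymm) (k : ℕ) (hk : k ≤ N) :
    (Polynomial.X ^ k ∣ mulmuleyPoly A) ↔
      k ≤ Module.finrank ℂ (LinearMap.ker A.mulVecLin) := by
  classical
  set D := Matrix.diagonal fun i : Fin N => (Polynomial.X : Polynomial ℂ) ^ (i : ℕ) with hD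
  set r := A.rank with hrk
  -- the row space
  set W : Submodule ℂ (Fin N → ℂ) := Submodule.span ℂ (Set.range A) with hWdef
  have hWr : LinearMap.range A.mulVecLin = W := by
    rw [Matrix.range_mulVecLin]
    show Submodule.span ℂ (Set.range Aᵀ) = W
    rw [hA.eq]
  have hWrank : Module.finrank ℂ W = r := by
    rw [hrk, Matrix.rank, hWr]
  have hrN : r ≤ N := by
    simpa using A.rank_le_card_width
  obtain ⟨u, t, htinj, hut, htop, hspan⟩ := exists_adapted_basis r W hWrank
  set Q : Matrix (Fin r) (Fin N) ℂ := Matrix.of u with hQ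
  have hrangeQ : Set.range Q = Set.range u := rfl
  -- Q has full row rank, hence mulVecLin is surjective
  have hranksurj : LinearMap.range Q.mulVecLin = ⊤ := by
    apply Submodule.eq_top_of_finrank_eq
    have h1 : Q.rank = r := by
      rw [← Matrix.rank_transpose, Matrix.rank, Matrix.range_mulVecLin]
      show Module.finrank ℂ (Submodule.span ℂ (Set.range Qᵀᵀ)) = r
      rw [
        Matrix.transpose_transpose, hrangeQ, hspan, hWrank]
    rw [← Matrix.rank, h1, Module.finrank_fin_fun]
  -- right inverse
  obtain ⟨g, hg⟩ := LinearMap.exists_rightInverse_of_surjective Q.mulVecLin hranksurj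
  set Rm : Matrix (Fin N) (Fin r) ℂ := LinearMap.toMatrix' g with hRm
  have hQRm : Q * Rm = 1 := by
    have h2 : Rm.mulVecLin = g := by
      rw [hRm, ← Matrix.toLin'_apply', Matrix.toLin'_toMatrix']
    have h1 : (Q * Rm).mulVecLin = LinearMap.id := by
      rw [Matrix.mulVecLin_mul, h2]
      exact hg
    apply Matrix.toLin'.injective
    rw [Matrix.toLin'_apply', Matrix.toLin'_apply', h1, Matrix.mulVecLin_one]
  have hfix : ∀ v ∈ W, v ᵥ* (Rm * Q) = v := by
    have hsub : W ≤ LinearMap.ker ((Rm * Q).vecMulLinear - LinearMap.id) := by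
      rw [← hspan, Submodule.span_le]
      rintro x ⟨a, rfl⟩
      rw [SetLike.mem_coe, LinearMap.mem_ker, LinearMap.sub_apply, LinearMap.id_apply,
        Matrix.vecMulLinear_apply, sub_eq_zero]
      have h0 : u a = Pi.single a 1 ᵥ* Q := by
        funext j
        rw [Matrix.single_vecMul]
        simp [hQ]
      rw [h0, Matrix.vecMul_vecMul, ← Matrix.mul_assoc, hQRm, Matrix.one_mul]
    intro v hv
    have := hsub hv
    rw [LinearMap.mem_ker, LinearMap.sub_apply, LinearMap.id_apply,
      Matrix.vecMulLinear_apply, sub_eq_zero] at this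
    exact this
  -- rows of A lie in W
  have hrow : ∀ a, A a ∈ W := fun a => Submodule.subset_span ⟨a, rfl⟩
  have hARQ : A * (Rm * Q) = A := by
    ext a j
    have h1 : (A * (Rm * Q)) a = (A a) ᵥ* (Rm * Q) := by
      funext j'
      simp [Matrix.mul_apply, Matrix.vecMul, dotProduct]
    rw [h1, hfix _ (hrow a)]
  set G : Matrix (Fin r) (Fin r) ℂ := Rmᵀ * A * Rm with hG
  have hQGQ : Qᵀ * G * Q = A := by
    have h1 : Qᵀ * Rmᵀ * A = A := by
      have h2 : (Qᵀ * Rmᵀ * A)ᵀ = Aᵀ * (Rm * Q) := by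
        rw [Matrix.transpose_mul, Matrix.transpose_mul, Matrix.transpose_transpose,
          Matrix.transpose_transpose]
      have h3 : (Qᵀ * Rmᵀ * A)ᵀ = A := by
        rw [h2, hA.eq, hARQ]
      calc Qᵀ * Rmᵀ * A = ((Qᵀ * Rmᵀ * A)ᵀ)ᵀ := by rw [Matrix.transpose_transpose]
        _ = Aᵀ := by rw [h3]
        _ = A := hA.eq
    calc Qᵀ * G * Q = (Qᵀ * Rmᵀ * A) * (Rm * Q) := by
          rw [hG]; simp only [Matrix.mul_assoc]
      _ = A * (Rm * Q) := by rw [h1]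
      _ = A := hARQ
  have hdetG : G.det ≠ 0 := by
    have h1 : r ≤ G.rank := by
      calc r = A.rank := hrk
        _ = (Qᵀ * G * Q).rank := by rw [hQGQ]
        _ ≤ (Qᵀ * G).rank := Matrix.rank_mul_le_left _ _
        _ ≤ G.rank := Matrix.rank_mul_le_right _ _
    have h2 : G.rank ≤ r := by simpa using G.rank_le_card_width
    have h3 : LinearMap.range G.mulVecLin = ⊤ := by
      apply Submodule.eq_top_of_finrank_eq
      rw [← Matrix.rank, Module.finrank_fin_fun]
      omega
    have h4 : Function.Injective G.mulVecLin :=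
      (LinearMap.injective_iff_surjective).mpr (LinearMap.range_eq_top.mp h3)
    intro h0
    obtain ⟨v, hv, hV⟩ := (Matrix.exists_mulVec_eq_zero_iff).mpr h0
    apply hv
    have : G.mulVecLin v = G.mulVecLin 0 := by
      simpa [Matrix.mulVecLin_apply] using hV
    exact h4 this
  set QC : Matrix (Fin r) (Fin N) (Polynomial ℂ) := Q.map Polynomial.C with hQC
  have hmapA : A.map Polynomial.C = QCᵀ * (G.map Polynomial.C) * QC := by
    rw [← hQGQ, Matrix.map_mul, Matrix.map_mul, Matrix.transpose_map]
  set XX : Matrix (Fin N) (Fin r) (Polynomial ℂ) := D * QCᵀ * (G.map Polynomial.C) with hXX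
  have hsplit : D * A.map Polynomial.C = XX * QC := by
    rw [hmapA, hXX]
    simp only [Matrix.mul_assoc]
  have hmm : mulmuleyPoly A = (D * A.map Polynomial.C).charpoly := rfl
  have hfact : mulmuleyPoly A = Polynomial.X ^ (N - r) * (QC * XX).charpoly := by
    rw [hmm, hsplit, charpoly_mul_comm_rect hrN]
  have hgram := gram_det_ne_zero u t htinj hut htop
  have hdetYX : (QC * XX).det ≠ 0 := by
    have hre : QC * XX = (QC * D * QCᵀ) * (G.map Polynomial.C) := by
      rw [hXX]
      simp only [Matrix.mul_assoc]
    rw [hre, Matrix.det_mul]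
    apply mul_ne_zero
    · exact hgram
    · have : (G.map Polynomial.C).det = Polynomial.C G.det :=
        ((Polynomial.C : ℂ →+* Polynomial ℂ).map_det G).symm
      rw [this]
      simpa using hdetG
  have hcoeff0 : (QC * XX).charpoly.coeff 0 ≠ 0 := by
    have hds := Matrix.det_eq_sign_charpoly_coeff (QC * XX)
    intro h0
    rw [h0, mul_zero] at hds
    exact hdetYX hds
  have hker : r + Module.finrank ℂ (LinearMap.ker A.mulVecLin) = N := by
    have hrn := LinearMap.finrank_range_add_finrank_ker A.mulVecLin
    rw [hWr, hWrank, Module.finrank_fin_fun] at hrn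
    exact hrn
  constructor
  · intro hdvd
    by_contra hlt
    push_neg at hlt
    have hkgt : (N - r) + 1 ≤ k := by omega
    have hXdvd : Polynomial.X ^ (N - r) * Polynomial.X ∣ mulmuleyPoly A := by
      calc Polynomial.X ^ (N - r) * Polynomial.X = Polynomial.X ^ ((N - r) + 1) := by
            rw [pow_succ]
        _ ∣ Polynomial.X ^ k := pow_dvd_pow _ hkgt
        _ ∣ _ := hdvd
    rw [hfact] at hXdvd
    have hXq : Polynomial.X ∣ (QC * XX).charpoly := by
      have hXne : (Polynomial.X : Polynomial (Polynomial ℂ)) ^ (N - r) ≠ 0 :=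
        pow_ne_zero _ Polynomial.X_ne_zero
      exact (mul_dvd_mul_iff_left hXne).mp hXdvd
    rw [Polynomial.X_dvd_iff] at hXq
    exact hcoeff0 hXq
  · intro hle
    have hk2 : k ≤ N - r := by omega
    rw [hfact]
    exact Dvd.dvd.mul_right (pow_dvd_pow _ hk2) _
end
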